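/- Veblen's theorem: a finite simple graph G has all vertex degrees even if and only if there exists a finite collection of cycles of G whose edge sets are pairwise disjoint and whose union equals the edge set of G. -/

import Mathlib

open SimpleGraph Finset

namespace VeblenAux

variable {V : Type*}

/-- degree as a count of incident edges -/
lemma degree_eq_card_filter [Fintype V] [DecidableEq V] (G : SimpleGraph V)
    [DecidableRel G.Adj] (v : V) :
    G.degree v = (G.edgeFinset.filter (v ∈ ·)).card := by
  rw [← SimpleGraph.card_incidenceFinset_eq_degree, SimpleGraph.incidenceFinset_eq_filter]

/-- a graph with an edge and all degrees even has a cycle -/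
lemma exists_cycle_of_even_degrees [Fintype V] (G : SimpleGraph V) [DecidableRel G.Adj]
    (hdeg : ∀ v, Even (G.degree v)) {a b : V} (hab : G.Adj a b) :
    ∃ (u : V) (c : G.Walk u u), c.IsCycle := by
  classical
  have hcard : 1 ≤ Fintype.card V := Fintype.card_pos_iff.mpr ⟨a⟩
  set P : ℕ → Prop := fun m => ∃ (x y : V) (p : G.Walk x y), p.IsPath ∧ p.length = m with hP
  have h1 : P 1 := ⟨a, b, .cons hab .nil, by simp [SimpleGraph.Walk.isPath_def, hab.ne], rfl⟩
  set n := Nat.findGreatest P (Fintype.card V) with hn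
  have hPn : P n := Nat.findGreatest_spec hcard h1
  have hn1 : 1 ≤ n := Nat.le_findGreatest hcard h1
  have hmax : ∀ (z w : V) (q : G.Walk z w), q.IsPath → q.length ≤ n := by
    intro z w q hq
    by_contra hlt
    exact Nat.findGreatest_is_greatest (Nat.lt_of_not_le hlt) hq.length_lt.le
      ⟨z, w, q, hq, rfl⟩
  obtain ⟨x, y, p, hp, hlen⟩ := hPn
  cases p with
  | nil => simp [← hlen] at hn1
  | cons hxb p' =>
    rename_i b'
    rw [SimpleGraph.Walk.cons_isPath_iff] at hp
    obtain ⟨hp', hxs⟩ := hp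
    -- x has at least two neighbors
    have hb'mem : b' ∈ G.neighborFinset x := by simpa using hxb
    have h2 : 1 < (G.neighborFinset x).card := by
      have := hdeg x
      rw [← SimpleGraph.card_neighborFinset_eq_degree] at this
      rcases this with ⟨t, ht⟩
      have : 0 < (G.neighborFinset x).card := Finset.card_pos.mpr ⟨b', hb'mem⟩
      omega
    obtain ⟨d, hdmem, hdb⟩ := Finset.exists_mem_ne h2 b'
    have hdx : G.Adj x d := by simpa using hdmem
    -- d must be on the path, else we can extend
    have hd_supp : d ∈ (SimpleGraph.Walk.cons hxb p').support := by
      by_contra hd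
      have hq : (SimpleGraph.Walk.cons hdx.symm (SimpleGraph.Walk.cons hxb p')).IsPath := by
        rw [SimpleGraph.Walk.cons_isPath_iff]
        exact ⟨by rw [SimpleGraph.Walk.cons_isPath_iff]; exact ⟨hp', hxs⟩, hd⟩
      have := hmax _ _ _ hq
      simp only [SimpleGraph.Walk.length_cons] at this hlen
      omega
    -- build the cycle
    set q := (SimpleGraph.Walk.cons hxb p').takeUntil d hd_supp with hq
    have hqp : q.IsPath := SimpleGraph.Walk.IsPath.takeUntil
      (by rw [SimpleGraph.Walk.cons_isPath_iff]; exact ⟨hp', hxs⟩) hd_supp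
    have hne : s(d, x) ∉ q.edges := by
      intro hmem
      have hmem' : s(d, x) ∈ (SimpleGraph.Walk.cons hxb p').edges :=
        SimpleGraph.Walk.edges_takeUntil_subset _ hd_supp hmem
      rw [SimpleGraph.Walk.edges_cons, List.mem_cons] at hmem'
      rcases hmem' with h | h
      · rw [Sym2.eq_iff] at h
        rcases h with ⟨rfl, rfl⟩ | ⟨rfl, h⟩
        · exact hdx.ne rfl
        · exact hdb rfl
      · exact hxs (SimpleGraph.Walk.snd_mem_support_of_mem_edges p' h)
    exact ⟨d, SimpleGraph.Walk.cons hdx.symm q,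
      SimpleGraph.Path.cons_isCycle ⟨q, hqp⟩ hdx.symm hne⟩

lemma countP_card {l : List (Sym2 V)} [DecidableEq V] (hl : l.Nodup) (v : V) :
    (l.toFinset.filter (v ∈ ·)).card = l.countP (fun e => v ∈ e) := by
  have h : l.toFinset.filter (fun e => v ∈ e) = (l.filter (fun e => decide (v ∈ e))).toFinset := by
    ext e; simp
  rw [h, List.toFinset_card_of_nodup (hl.filter _), List.countP_eq_length_filter]

lemma forward [Fintype V] : ∀ (k : ℕ) (G : SimpleGraph V) [DecidableRel G.Adj],
    G.edgeFinset.card ≤ k → (∀ v, Even (G.degree v)) →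
    ∃ (n : ℕ) (v : Fin n → V) (c : ∀ i : Fin n, G.Walk (v i) (v i)),
      (∀ i, (c i).IsCycle) ∧
      (∀ i j, i ≠ j → ∀ e : Sym2 V, e ∈ (c i).edges → e ∉ (c j).edges) ∧
      (∀ e : Sym2 V, e ∈ G.edgeSet ↔ ∃ i, e ∈ (c i).edges) := by
  classical
  intro k
  induction k with
  | zero =>
    intro G _ hcard _
    refine ⟨0, Fin.elim0, fun i => i.elim0, fun i => i.elim0, fun i => i.elim0, fun e => ?_⟩
    simp only [Nat.le_zero, Finset.card_eq_zero] at hcard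
    constructor
    · intro he
      exact absurd (SimpleGraph.mem_edgeFinset.mpr he) (by simp [hcard])
    · rintro ⟨i, -⟩; exact i.elim0
  | succ k ih =>
    intro G _ hcard hdeg
    by_cases hbot : G.edgeFinset = ∅
    · refine ⟨0, Fin.elim0, fun i => i.elim0, fun i => i.elim0, fun i => i.elim0, fun e => ?_⟩
      constructor
      · intro he
        exact absurd (SimpleGraph.mem_edgeFinset.mpr he) (by simp [hbot])
      · rintro ⟨i, -⟩; exact i.elim0
    · obtain ⟨e0, he0⟩ := Finset.nonempty_iff_ne_empty.mpr hbot
      rw [SimpleGraph.mem_edgeFinset] at he0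
      induction e0 with | _ a b =>
      obtain ⟨u, c, hc⟩ := exists_cycle_of_even_degrees G hdeg he0
      set s : Finset (Sym2 V) := c.edges.toFinset with hs
      set G' : SimpleGraph V := G.deleteEdges ↑s with hG'
      haveI : DecidableRel G'.Adj := fun a b => by
        rw [hG', SimpleGraph.deleteEdges_adj]
        exact instDecidableAnd
      have hsub : s ⊆ G.edgeFinset := by
        intro e he
        rw [hs, List.mem_toFinset] at he
        exact SimpleGraph.mem_edgeFinset.mpr (c.edges_subset_edgeSet he)
      have hEF : G'.edgeFinset = G.edgeFinset \ s := by
        ext e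
        rw [Finset.mem_sdiff, SimpleGraph.mem_edgeFinset, SimpleGraph.mem_edgeFinset, hG',
          SimpleGraph.edgeSet_deleteEdges, Set.mem_diff, Finset.mem_coe]
      have hsne : s.Nonempty := by
        refine ⟨c.edges.head ?_, ?_⟩
        · intro h
          have h3 := hc.three_le_length
          rw [← SimpleGraph.Walk.length_edges, h] at h3
          simp at h3
        · rw [hs, List.mem_toFinset]; exact List.head_mem _
      have hcard' : G'.edgeFinset.card ≤ k := by
        rw [hEF, Finset.card_sdiff_of_subset hsub]
        have := Finset.card_pos.mpr hsne
        omega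
      -- even degrees in G'
      have hdeg' : ∀ v, Even (G'.degree v) := by
        intro v
        have hsplit : G.edgeFinset.filter (v ∈ ·) =
            (G'.edgeFinset.filter (v ∈ ·)) ∪ (s.filter (v ∈ ·)) := by
          rw [hEF, ← Finset.filter_union, Finset.sdiff_union_of_subset hsub]
        have hdisj : Disjoint (G'.edgeFinset.filter (v ∈ ·)) (s.filter (v ∈ ·)) := by
          rw [hEF]
          exact (Finset.sdiff_disjoint.mono (Finset.filter_subset _ _) (Finset.filter_subset _ _))
        have hcnt : (s.filter (v ∈ ·)).card = c.edges.countP (fun e => v ∈ e) :=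
          countP_card hc.isTrail.edges_nodup v
        have heven_cnt : Even (c.edges.countP (fun e => v ∈ e)) := by
          rw [hc.isTrail.even_countP_edges_iff v]
          intro h; exact absurd rfl h
        have := hdeg v
        rw [degree_eq_card_filter, hsplit, Finset.card_union_of_disjoint hdisj, hcnt] at this
        rw [degree_eq_card_filter]
        rcases this with ⟨t, ht⟩
        rcases heven_cnt with ⟨r, hr⟩
        exact ⟨t - r, by omega⟩
      obtain ⟨n, v', c', hcyc, hdisj, hspec⟩ := ih G' hcard' hdeg'
      have hsub' : ∀ i, ∀ e ∈ (c' i).edges, e ∈ G.edgeSet := by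
        intro i e he
        have := (c' i).edges_subset_edgeSet he
        rw [hG', SimpleGraph.edgeSet_deleteEdges] at this
        exact this.1
      have hnotins : ∀ i, ∀ e ∈ (c' i).edges, e ∉ (s : Set (Sym2 V)) := by
        intro i e he
        have := (c' i).edges_subset_edgeSet he
        rw [hG', SimpleGraph.edgeSet_deleteEdges] at this
        exact this.2
      let w : Fin (n + 1) → V := Fin.cons u v'
      let cw : ∀ i : Fin (n + 1), G.Walk (w i) (w i) :=
        Fin.cons c (fun i => (c' i).transfer G (hsub' i))
      refine ⟨n + 1, w, cw, ?_, ?_, ?_⟩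
      · intro i
        induction i using Fin.cases with
        | zero => exact hc
        | succ j => exact (hcyc j).transfer _
      · intro i j hij e
        induction i using Fin.cases with
        | zero =>
          induction j using Fin.cases with
          | zero => exact absurd rfl hij
          | succ j' =>
            intro hei hej
            simp only [cw, Fin.cons_zero, Fin.cons_succ] at hei hej
            change e ∈ ((c' j').transfer G (hsub' j')).edges at hej
            rw [SimpleGraph.Walk.edges_transfer] at hej
            exact hnotins j' e hej (by rw [hs]; exact List.mem_toFinset.mpr hei)
        | succ i' =>
          induction j using Fin.cases with
          | zero =>
            intro hei hej
            simp only [cw, Fin.cons_zero, Fin.cons_succ] at hei hej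
            change e ∈ ((c' i').transfer G (hsub' i')).edges at hei
            rw [SimpleGraph.Walk.edges_transfer] at hei
            exact hnotins i' e hei (by rw [hs]; exact List.mem_toFinset.mpr hej)
          | succ j' =>
            intro hei hej
            simp only [cw, Fin.cons_succ] at hei hej
            change e ∈ ((c' i').transfer G (hsub' i')).edges at hei
            change e ∈ ((c' j').transfer G (hsub' j')).edges at hej
            rw [SimpleGraph.Walk.edges_transfer] at hei hej
            exact hdisj i' j' (fun h => hij (by rw [h])) e hei hej
      · intro e
        rw [Fin.exists_fin_succ]
        simp only [cw, Fin.cons_zero, Fin.cons_succ, SimpleGraph.Walk.edges_transfer]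
        change _ ↔ _ ∨ ∃ i : Fin n, e ∈ ((c' i).transfer G (hsub' i)).edges
        simp only [SimpleGraph.Walk.edges_transfer]
        constructor
        · intro he
          by_cases hes : e ∈ c.edges
          · exact Or.inl hes
          · refine Or.inr ((hspec e).mp ?_)
            rw [hG', SimpleGraph.edgeSet_deleteEdges]
            exact ⟨he, by simpa [hs] using hes⟩
        · rintro (he | ⟨i, he⟩)
          · exact c.edges_subset_edgeSet he
          · exact hsub' i e he

end VeblenAux

theorem veblen_even_degrees_iff_disjoint_cycle_decomposition
    {V : Type*} [Fintype V] (G : SimpleGraph V) [DecidableRel G.Adj] :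
    (∀ v : V, Even (G.degree v)) ↔
      ∃ (n : ℕ) (v : Fin n → V) (c : ∀ i : Fin n, G.Walk (v i) (v i)),
        (∀ i, (c i).IsCycle) ∧
        (∀ i j, i ≠ j → ∀ e : Sym2 V, e ∈ (c i).edges → e ∉ (c j).edges) ∧
        (∀ e : Sym2 V, e ∈ G.edgeSet ↔ ∃ i, e ∈ (c i).edges) := by
  classical
  constructor
  · intro hdeg
    exact VeblenAux.forward G.edgeFinset.card G le_rfl hdeg
  · rintro ⟨n, v, c, hcyc, hdisj, hspec⟩ x
    rw [VeblenAux.degree_eq_card_filter]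
    have hEF : G.edgeFinset = Finset.univ.biUnion (fun i => (c i).edges.toFinset) := by
      ext e
      simp only [SimpleGraph.mem_edgeFinset, Finset.mem_biUnion, Finset.mem_univ, true_and,
        List.mem_toFinset]
      exact hspec e
    have hpd : ∀ i ∈ (Finset.univ : Finset (Fin n)), ∀ j ∈ Finset.univ, i ≠ j →
        Disjoint ((c i).edges.toFinset.filter (x ∈ ·)) ((c j).edges.toFinset.filter (x ∈ ·)) := by
      intro i _ j _ hij
      rw [Finset.disjoint_left]
      intro e hei hej
      rw [Finset.mem_filter, List.mem_toFinset] at hei hej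
      exact hdisj i j hij e hei.1 hej.1
    rw [hEF, Finset.filter_biUnion, Finset.card_biUnion hpd]
    refine Finset.even_sum _ (fun i _ => ?_)
    rw [VeblenAux.countP_card (hcyc i).isTrail.edges_nodup x,
      (hcyc i).isTrail.even_countP_edges_iff x]
    intro h; exact absurd rfl h
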